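/- Let n ≥ 1 and let C be an n×n real symmetric circulant matrix, i.e. C_{lm} = c_{(l−m) mod n} for real numbers c₀,…,c_{n−1} satisfying c_k = c_{(n−k) mod n} for all k. Fix 0 ≤ j ≤ n−1 and define the twisted state θ^{(j)} ∈ ℝ^n by θ^{(j)}_m = 2π j m / n for m = 0,…,n−1. Then for every l, ∑_{m=0}^{n−1} C_{lm} sin(θ^{(j)}_m − θ^{(j)}_l) = 0; that is, θ^{(j)} is an equilibrium point of the homogeneous Kuramoto model with adjacency matrix C. -/

import Mathlib

/-- For a real symmetric circulant matrix `C` (`C lm = c (l−m)` with `c_k = c_{(n−k) mod n}`)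
and any `0 ≤ j ≤ n − 1`, the twisted state `θ^{(j)}_m = 2π j m / n` is an equilibrium
point of the homogeneous Kuramoto model with adjacency matrix `C`:
`∑_m C_{lm} sin(θ^{(j)}_m − θ^{(j)}_l) = 0` for every `l`. -/
theorem circulant_twisted_state_equilibrium (n : ℕ) (hn : 1 ≤ n) (c : Fin n → ℝ)
    (hsym : ∀ k : Fin n, c k = c (-k)) (j : Fin n) :
    ∀ l : Fin n, ∑ m : Fin n, Matrix.circulant c l m *
        Real.sin (2 * Real.pi * (j : ℕ) * (m : ℕ) / n
          - 2 * Real.pi * (j : ℕ) * (l : ℕ) / n) = 0 := by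
  haveI : NeZero n := ⟨by omega⟩
  have hn0 : (n : ℝ) ≠ 0 := by
    exact Nat.cast_ne_zero.mpr (by omega)
  -- key : value of sin only depends on difference in Fin n
  have key : ∀ a b : Fin n,
      Real.sin (2 * Real.pi * (j : ℕ) * (((a - b : Fin n)) : ℕ) / n)
        = Real.sin (2 * Real.pi * (j : ℕ) * (a : ℕ) / n
            - 2 * Real.pi * (j : ℕ) * (b : ℕ) / n) := by
    intro a b
    obtain ⟨t, ht⟩ : ∃ t : ℤ, (((a - b : Fin n)) : ℕ) = (a : ℤ) - (b : ℤ) + t * n := by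
      set x := n - (b : ℕ) + (a : ℕ) with hx
      have hq := Nat.mod_add_div x n
      have hb : (b : ℕ) < n := b.isLt
      refine ⟨1 - (x / n : ℕ), ?_⟩
      have h1 : ((a - b : Fin n) : ℕ) = x % n := by
        rw [Fin.sub_def]
      have hqz : ((x % n : ℕ) : ℤ) + (n : ℤ) * ((x / n : ℕ) : ℤ) = (x : ℤ) := by
        exact_mod_cast hq
      have hxz : (x : ℤ) = (n : ℤ) - (b : ℕ) + (a : ℕ) := by
        rw [hx]; push_cast [Nat.cast_sub hb.le]; ring
      rw [h1]
      push_cast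
      linarith [hqz, hxz]
    have harg : 2 * Real.pi * (j : ℕ) * (((a - b : Fin n)) : ℕ) / n
        = (2 * Real.pi * (j : ℕ) * (a : ℕ) / n
            - 2 * Real.pi * (j : ℕ) * (b : ℕ) / n) + ((j : ℕ) * t : ℤ) * (2 * Real.pi) := by
      have h2 : ((((a - b : Fin n)) : ℕ) : ℝ) = (a : ℕ) - (b : ℕ) + (t : ℝ) * n := by
        exact_mod_cast ht
      rw [h2]
      push_cast
      field_simp
    rw [harg, Real.sin_add_int_mul_two_pi]
  intro l
  have step1 : ∀ m : Fin n, Matrix.circulant c l m *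
      Real.sin (2 * Real.pi * (j : ℕ) * (m : ℕ) / n
        - 2 * Real.pi * (j : ℕ) * (l : ℕ) / n)
      = c (l - m) * Real.sin (2 * Real.pi * (j : ℕ) * ((m - l : Fin n) : ℕ) / n) := by
    intro m
    rw [Matrix.circulant_apply, key m l]
  rw [Finset.sum_congr rfl (fun m _ => step1 m)]
  set f : Fin n → ℝ := fun k => Real.sin (2 * Real.pi * (j : ℕ) * (k : ℕ) / n) with hf
  have hfneg : ∀ k : Fin n, f (-k) = -f k := by
    intro k
    have := key 0 k
    rw [zero_sub] at this
    simp only [hf]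
    rw [this]
    simp [Real.sin_neg]
  have h1 : ∑ m : Fin n, c (l - m) * f (m - l) = ∑ k : Fin n, c k * f k := by
    rw [← Equiv.sum_comp (Equiv.addRight l) (fun m => c (l - m) * f (m - l))]
    apply Finset.sum_congr rfl
    intro k _
    simp only [Equiv.coe_addRight]
    rw [show l - (k + l) = -k by abel, show k + l - l = k by abel, ← hsym k]
  have h2 : ∑ m : Fin n, c (l - m) * f (m - l) = -∑ k : Fin n, c k * f k := by
    rw [← Equiv.sum_comp (Equiv.subLeft l) (fun m => c (l - m) * f (m - l))]
    rw [← Finset.sum_neg_distrib]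
    apply Finset.sum_congr rfl
    intro k _
    simp only [Equiv.subLeft_apply]
    rw [show l - (l - k) = k by abel, show l - k - l = -k by abel, hfneg k]
    ring
  linarith [h1, h2]
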